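/- Among all trees on n ≥ 2 vertices, the path P_n has strictly fewer subtrees than any other tree on n vertices. -/

import Mathlib

open SimpleGraph

/-- The number of subtrees of a graph `G`: nonempty vertex subsets inducing a
connected subgraph. -/
noncomputable def numSubtrees {V : Type*} [Fintype V] (G : SimpleGraph V) : ℕ :=
  {S : Set V | S.Nonempty ∧ (G.induce S).Connected}.ncard

namespace PathMinAux

open SimpleGraph Walk

variable {V : Type*} {G : SimpleGraph V}

/-- `getVert` is injective on indices `≤ length` for a path. -/
lemma getVert_inj {u v : V} {p : G.Walk u v} (hp : p.IsPath) :
    ∀ i j, i ≤ p.length → j ≤ p.length → p.getVert i = p.getVert j → i = j := by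
  induction p with
  | nil => intro i j hi hj _; simp only [Walk.length_nil] at hi hj; omega
  | @cons a b c h q ih =>
    rw [Walk.cons_isPath_iff] at hp
    intro i j hi hj hij
    simp only [Walk.length_cons] at hi hj
    match i, j with
    | 0, 0 => rfl
    | 0, j + 1 =>
      exfalso
      apply hp.2
      rw [Walk.getVert_zero, Walk.getVert_cons_succ] at hij
      exact Walk.mem_support_iff_exists_getVert.mpr ⟨j, hij.symm, by omega⟩
    | i + 1, 0 =>
      exfalso
      apply hp.2
      rw [Walk.getVert_zero, Walk.getVert_cons_succ] at hij
      exact Walk.mem_support_iff_exists_getVert.mpr ⟨i, hij, by omega⟩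
    | i + 1, j + 1 =>
      rw [Walk.getVert_cons_succ, Walk.getVert_cons_succ] at hij
      have := ih hp.1 i j (by omega) (by omega) hij
      omega

/-- In a tree, every path between `u` and `v` has length `G.dist u v`. -/
lemma path_length_eq_dist (hG : G.IsTree) {u v : V} {p : G.Walk u v} (hp : p.IsPath) :
    p.length = G.dist u v := by
  obtain ⟨q, hq, hql⟩ := (hG.isConnected.preconnected u v).exists_path_of_dist
  have h := hG.IsAcyclic.path_unique ⟨p, hp⟩ ⟨q, hq⟩
  have : p = q := congrArg Subtype.val h
  rw [this, hql]

/-- In a tree, the support of a path determines its endpoints. -/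
lemma endpoints_of_support_eq (hG : G.IsTree) {u v u' v' : V}
    {p : G.Walk u v} {p' : G.Walk u' v'} (hp : p.IsPath) (hp' : p'.IsPath)
    (h : {x | x ∈ p.support} = {x | x ∈ p'.support}) :
    (u = u' ∧ v = v') ∨ (u = v' ∧ v = u') := by
  classical
  have hconn := hG.isConnected
  have hmem : ∀ x, x ∈ p.support ↔ x ∈ p'.support := fun x => Set.ext_iff.mp h x
  -- the two paths have the same length
  have hfin : p.support.toFinset = p'.support.toFinset := by
    ext x; simp only [List.mem_toFinset]; exact hmem x
  have hd : p.length = p'.length := by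
    have c1 := List.toFinset_card_of_nodup hp.support_nodup
    have c2 := List.toFinset_card_of_nodup hp'.support_nodup
    have l1 := p.length_support
    have l2 := p'.length_support
    rw [hfin] at c1
    omega
  have hu' : u' ∈ p.support := (hmem u').mpr p'.start_mem_support
  have hq1 : (p.takeUntil u' hu').IsPath := hp.takeUntil hu'
  have hq2 : (p.dropUntil u' hu').IsPath := hp.dropUntil hu'
  have hsplit := p.take_spec hu'
  have hlen : (p.takeUntil u' hu').length + (p.dropUntil u' hu').length = p.length := by
    conv_rhs => rw [← hsplit]
    rw [Walk.length_append]
  have e1 : G.dist u u' = (p.takeUntil u' hu').length := (path_length_eq_dist hG hq1).symm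
  have e2 : G.dist u' v = (p.dropUntil u' hu').length := (path_length_eq_dist hG hq2).symm
  have ed : G.dist u' v' = p.length := by
    rw [← path_length_eq_dist hG hp', hd]
  have hv' : v' ∈ p.support := (hmem v').mpr p'.end_mem_support
  have hv'' : v' ∈ (p.takeUntil u' hu').support ∨ v' ∈ (p.dropUntil u' hu').support := by
    rw [← hsplit] at hv'
    exact (Walk.mem_support_append_iff _ _).mp hv'
  rcases hv'' with hv2 | hv2
  · -- v' lies on the segment from u to u'
    right
    have hr1 : ((p.takeUntil u' hu').takeUntil v' hv2).IsPath := hq1.takeUntil hv2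
    have hr2 : ((p.takeUntil u' hu').dropUntil v' hv2).IsPath := hq1.dropUntil hv2
    have hlen2 : ((p.takeUntil u' hu').takeUntil v' hv2).length +
        ((p.takeUntil u' hu').dropUntil v' hv2).length = (p.takeUntil u' hu').length := by
      conv_rhs => rw [← (p.takeUntil u' hu').take_spec hv2]
      rw [Walk.length_append]
    have f1 : G.dist u v' = ((p.takeUntil u' hu').takeUntil v' hv2).length :=
      (path_length_eq_dist hG hr1).symm
    have f2 : G.dist v' u' = ((p.takeUntil u' hu').dropUntil v' hv2).length :=
      (path_length_eq_dist hG hr2).symm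
    have hcomm : G.dist v' u' = G.dist u' v' := dist_comm
    have h1 : G.dist u v' = 0 := by omega
    have h2 : G.dist u' v = 0 := by omega
    exact ⟨hconn.dist_eq_zero_iff.mp h1, (hconn.dist_eq_zero_iff.mp h2).symm⟩
  · -- v' lies on the segment from u' to v
    left
    have hr1 : ((p.dropUntil u' hu').takeUntil v' hv2).IsPath := hq2.takeUntil hv2
    have hr2 : ((p.dropUntil u' hu').dropUntil v' hv2).IsPath := hq2.dropUntil hv2
    have hlen2 : ((p.dropUntil u' hu').takeUntil v' hv2).length +
        ((p.dropUntil u' hu').dropUntil v' hv2).length = (p.dropUntil u' hu').length := by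
      conv_rhs => rw [← (p.dropUntil u' hu').take_spec hv2]
      rw [Walk.length_append]
    have f1 : G.dist u' v' = ((p.dropUntil u' hu').takeUntil v' hv2).length :=
      (path_length_eq_dist hG hr1).symm
    have f2 : G.dist v' v = ((p.dropUntil u' hu').dropUntil v' hv2).length :=
      (path_length_eq_dist hG hr2).symm
    have h1 : G.dist u u' = 0 := by omega
    have h2 : G.dist v' v = 0 := by omega
    exact ⟨hconn.dist_eq_zero_iff.mp h1, (hconn.dist_eq_zero_iff.mp h2).symm⟩

/-- A chosen path between two vertices of a connected graph. -/
noncomputable def tpath (hc : G.Connected) (u v : V) : G.Walk u v :=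
  ((hc.preconnected u v).exists_path_of_dist).choose

lemma tpath_isPath (hc : G.Connected) (u v : V) : (tpath hc u v).IsPath :=
  ((hc.preconnected u v).exists_path_of_dist).choose_spec.1

/-- The vertex set of the chosen path between `u` and `v`. -/
def pset (hc : G.Connected) (u v : V) : Set V := {x | x ∈ (tpath hc u v).support}

lemma pset_comm (hG : G.IsTree) (u v : V) :
    pset hG.isConnected u v = pset hG.isConnected v u := by
  have h1 := tpath_isPath hG.isConnected u v
  have h2 : (tpath hG.isConnected v u).reverse.IsPath := (tpath_isPath hG.isConnected v u).reverse
  have h := hG.IsAcyclic.path_unique ⟨tpath hG.isConnected u v, h1⟩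
    ⟨(tpath hG.isConnected v u).reverse, h2⟩
  have heq : tpath hG.isConnected u v = (tpath hG.isConnected v u).reverse :=
    congrArg Subtype.val h
  ext x
  simp only [pset, Set.mem_setOf_eq, heq, Walk.support_reverse, List.mem_reverse]

/-- The path set as a function on unordered pairs. -/
noncomputable def psym (hG : G.IsTree) : Sym2 V → Set V :=
  Sym2.lift ⟨fun u v => pset hG.isConnected u v, fun u v => pset_comm hG u v⟩

lemma psym_mk (hG : G.IsTree) (u v : V) : psym hG s(u, v) = pset hG.isConnected u v := rfl

lemma psym_inj (hG : G.IsTree) : Function.Injective (psym hG) := by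
  intro a b
  induction a using Sym2.ind with
  | _ u v =>
    induction b using Sym2.ind with
    | _ u' v' =>
      intro hab
      rw [psym_mk, psym_mk] at hab
      have := endpoints_of_support_eq hG (tpath_isPath hG.isConnected u v)
        (tpath_isPath hG.isConnected u' v') hab
      rw [Sym2.eq_iff]
      exact this

lemma psym_mem (hG : G.IsTree) (a : Sym2 V) :
    (psym hG a).Nonempty ∧ (G.induce (psym hG a)).Connected := by
  induction a using Sym2.ind with
  | _ u v =>
    rw [psym_mk]
    exact ⟨⟨u, (tpath hG.isConnected u v).start_mem_support⟩,
      (tpath hG.isConnected u v).connected_induce_support⟩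

/-- If the whole vertex set is the support of a path, the tree is a path graph. -/
lemma iso_of_univ_pset [Fintype V] {n : ℕ} (hG : G.IsTree) (hcard : Fintype.card V = n)
    {u v : V} (huniv : (Set.univ : Set V) = pset hG.isConnected u v) :
    Nonempty (G ≃g pathGraph n) := by
  classical
  set p := tpath hG.isConnected u v with hpdef
  have hp : p.IsPath := tpath_isPath hG.isConnected u v
  have hsupp : ∀ x : V, x ∈ p.support := fun x => (Set.ext_iff.mp huniv x).mp trivial
  have hlen : p.length + 1 = n := by
    have hfin : p.support.toFinset = Finset.univ := by
      ext x; simp [hsupp x]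
    have c := List.toFinset_card_of_nodup hp.support_nodup
    rw [hfin, Finset.card_univ, hcard] at c
    have := p.length_support
    omega
  have hinj : Function.Injective (fun i : Fin n => p.getVert i) := by
    intro i j hij
    exact Fin.ext (getVert_inj hp i j (by omega) (by omega) hij)
  have hbij : Function.Bijective (fun i : Fin n => p.getVert i) :=
    (Fintype.bijective_iff_injective_and_card _).mpr ⟨hinj, by simp [hcard]⟩
  haveI : Fintype G.edgeSet := Fintype.ofFinite _
  have hedges : G.edgeFinset = p.edges.toFinset := by
    refine (Finset.eq_of_subset_of_card_le ?_ ?_).symm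
    · intro e he
      rw [List.mem_toFinset] at he
      rw [mem_edgeFinset]
      exact p.edges_subset_edgeSet he
    · have hc := hG.card_edgeFinset
      rw [hcard] at hc
      rw [List.toFinset_card_of_nodup hp.isTrail.edges_nodup, p.length_edges]
      omega
  have key : ∀ i j : Fin n, G.Adj (p.getVert i) (p.getVert j) ↔ (pathGraph n).Adj i j := by
    intro i j
    constructor
    · intro hadj
      have he : s(p.getVert i, p.getVert j) ∈ p.edges := by
        have h1 : s(p.getVert i, p.getVert j) ∈ G.edgeFinset := mem_edgeFinset.mpr hadj
        rw [hedges, List.mem_toFinset] at h1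
        exact h1
      have hadj2 : p.toSubgraph.Adj (p.getVert i) (p.getVert j) := by
        rw [← SimpleGraph.Subgraph.mem_edgeSet, p.edgeSet_toSubgraph]
        exact he
      obtain ⟨k, hk, hklt⟩ := (p.toSubgraph_adj_iff).mp hadj2
      rw [Sym2.eq_iff] at hk
      rw [pathGraph_adj]
      rcases hk with ⟨h1, h2⟩ | ⟨h1, h2⟩
      · have e1 := getVert_inj hp k i (by omega) (by omega) h1
        have e2 := getVert_inj hp (k + 1) j (by omega) (by omega) h2
        omega
      · have e1 := getVert_inj hp k j (by omega) (by omega) h1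
        have e2 := getVert_inj hp (k + 1) i (by omega) (by omega) h2
        omega
    · intro hadj
      rw [pathGraph_adj] at hadj
      rcases hadj with hh | hh
      · have hilt : (i : ℕ) < p.length := by omega
        have := p.adj_getVert_succ hilt
        have hj : (j : ℕ) = (i : ℕ) + 1 := hh.symm
        rw [hj]
        exact this
      · have hjlt : (j : ℕ) < p.length := by omega
        have := (p.adj_getVert_succ hjlt).symm
        have hi : (i : ℕ) = (j : ℕ) + 1 := hh.symm
        rw [hi]
        exact this
  refine ⟨(Iso.symm ⟨Equiv.ofBijective _ hbij, ?_⟩ : G ≃g pathGraph n)⟩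
  intro i j
  exact key i j

/-- Discrete intermediate value theorem for walks in the path graph. -/
lemma pathGraph_walk_mem_support {n : ℕ} {a b : Fin n} (w : (pathGraph n).Walk a b) (c : Fin n)
    (h : ((a : ℕ) ≤ c ∧ (c : ℕ) ≤ b) ∨ ((b : ℕ) ≤ c ∧ (c : ℕ) ≤ a)) : c ∈ w.support := by
  induction w with
  | nil =>
    simp only [Walk.support_nil, List.mem_singleton]
    exact Fin.ext (by omega)
  | @cons x y z hadj q ih =>
    rw [Walk.support_cons]
    by_cases hc : c = x
    · rw [hc]; exact List.mem_cons_self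
    · refine List.mem_cons_of_mem _ (ih ?_)
      rw [pathGraph_adj] at hadj
      have hne : (c : ℕ) ≠ (x : ℕ) := fun hh => hc (Fin.ext hh)
      omega

/-- Every connected induced subgraph of the path graph is an interval. -/
lemma pathGraph_subtree_mem {n : ℕ} {S : Set (Fin n)}
    (hconn : ((pathGraph n).induce S).Connected)
    {a b : Fin n} (ha : a ∈ S) (hb : b ∈ S) {c : Fin n} (h1 : a ≤ c) (h2 : c ≤ b) : c ∈ S := by
  obtain ⟨w⟩ := hconn.preconnected ⟨a, ha⟩ ⟨b, hb⟩
  let f : (pathGraph n).induce S →g pathGraph n := ⟨Subtype.val, fun {x y} h => h⟩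
  have hmem := pathGraph_walk_mem_support (w.map f) c
    (Or.inl ⟨Fin.le_def.mp h1, Fin.le_def.mp h2⟩)
  rw [Walk.support_map] at hmem
  obtain ⟨x, hx, hxc⟩ := List.mem_map.mp hmem
  exact hxc ▸ x.2

end PathMinAux

open PathMinAux in
theorem path_min_numSubtrees (n : ℕ) (hn : 2 ≤ n)
    (V : Type*) [Fintype V] (G : SimpleGraph V) (hG : G.IsTree)
    (hcard : Fintype.card V = n)
    (hnotpath : ¬ Nonempty (G ≃g SimpleGraph.pathGraph n)) :
    numSubtrees (SimpleGraph.pathGraph n) < numSubtrees G := by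
  classical
  have hnpos : 0 < n := by omega
  -- the set of subtrees of G
  have hVne : Nonempty V := by
    rw [← Fintype.card_pos_iff, hcard]; omega
  set 𝒮G := {S : Set V | S.Nonempty ∧ (G.induce S).Connected} with h𝒮G
  set 𝒮P := {S : Set (Fin n) | S.Nonempty ∧ ((SimpleGraph.pathGraph n).induce S).Connected}
    with h𝒮P
  -- Lower bound: injection from Sym2 V into subtrees of G
  have hrange : Set.range (psym hG) ⊆ 𝒮G := by
    rintro _ ⟨a, rfl⟩
    exact psym_mem hG a
  have huniv_mem : (Set.univ : Set V) ∈ 𝒮G :=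
    ⟨Set.univ_nonempty, (SimpleGraph.induceUnivIso G).connected_iff.mpr hG.isConnected⟩
  have huniv_not : (Set.univ : Set V) ∉ Set.range (psym hG) := by
    intro hmem
    rw [Set.mem_range, Sym2.exists] at hmem
    obtain ⟨u, v, huv⟩ := hmem
    rw [psym_mk] at huv
    exact hnotpath (iso_of_univ_pset hG hcard huv.symm)
  have hssub : Set.range (psym hG) ⊂ 𝒮G :=
    ⟨hrange, fun hsub => huniv_not (hsub huniv_mem)⟩
  have hlt : (Set.range (psym hG)).ncard < 𝒮G.ncard :=
    Set.ncard_lt_ncard hssub (Set.toFinite _)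
  have hcardrange : (Set.range (psym hG)).ncard = Fintype.card (Sym2 V) := by
    rw [← Set.image_univ, Set.ncard_image_of_injective _ (psym_inj hG), Set.ncard_univ,
      Nat.card_eq_fintype_card]
  -- Upper bound: injection from subtrees of the path graph into Sym2 (Fin n)
  set Φ : Set (Fin n) → Sym2 (Fin n) := fun S =>
    if h : S.Nonempty then
      s((S.toFinite.toFinset.min' (S.toFinite.toFinset_nonempty.mpr h)),
        (S.toFinite.toFinset.max' (S.toFinite.toFinset_nonempty.mpr h)))
    else s(⟨0, hnpos⟩, ⟨0, hnpos⟩) with hΦ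
  have hΦinj : Set.InjOn Φ 𝒮P := by
    rintro S hS T hT hST
    obtain ⟨hSne, hSconn⟩ := hS
    obtain ⟨hTne, hTconn⟩ := hT
    rw [hΦ] at hST
    simp only [dif_pos hSne, dif_pos hTne] at hST
    set a := S.toFinite.toFinset.min' (S.toFinite.toFinset_nonempty.mpr hSne) with hadef
    set b := S.toFinite.toFinset.max' (S.toFinite.toFinset_nonempty.mpr hSne) with hbdef
    set a' := T.toFinite.toFinset.min' (T.toFinite.toFinset_nonempty.mpr hTne) with ha'def
    set b' := T.toFinite.toFinset.max' (T.toFinite.toFinset_nonempty.mpr hTne) with hb'def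
    have hab : a ≤ b := Finset.min'_le _ _ (Finset.max'_mem _ _)
    have hab' : a' ≤ b' := Finset.min'_le _ _ (Finset.max'_mem _ _)
    rw [Sym2.eq_iff] at hST
    have haa : a = a' ∧ b = b' := by
      rcases hST with ⟨h1, h2⟩ | ⟨h1, h2⟩
      · exact ⟨h1, h2⟩
      · exact ⟨le_antisymm (hab.trans_eq h2) (hab'.trans_eq h1.symm),
          le_antisymm (h2.trans_le hab') (h1.symm.trans_le hab)⟩
    obtain ⟨haa', hbb'⟩ := haa
    have hmemS : ∀ x, x ∈ S ↔ (a ≤ x ∧ x ≤ b) := by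
      intro x
      constructor
      · intro hx
        have hx' : x ∈ S.toFinite.toFinset := S.toFinite.mem_toFinset.mpr hx
        exact ⟨Finset.min'_le _ _ hx', Finset.le_max' _ _ hx'⟩
      · rintro ⟨h1, h2⟩
        have haS : a ∈ S := S.toFinite.mem_toFinset.mp (Finset.min'_mem _ _)
        have hbS : b ∈ S := S.toFinite.mem_toFinset.mp (Finset.max'_mem _ _)
        exact pathGraph_subtree_mem hSconn haS hbS h1 h2
    have hmemT : ∀ x, x ∈ T ↔ (a' ≤ x ∧ x ≤ b') := by
      intro x
      constructor
      · intro hx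
        have hx' : x ∈ T.toFinite.toFinset := T.toFinite.mem_toFinset.mpr hx
        exact ⟨Finset.min'_le _ _ hx', Finset.le_max' _ _ hx'⟩
      · rintro ⟨h1, h2⟩
        have haT : a' ∈ T := T.toFinite.mem_toFinset.mp (Finset.min'_mem _ _)
        have hbT : b' ∈ T := T.toFinite.mem_toFinset.mp (Finset.max'_mem _ _)
        exact pathGraph_subtree_mem hTconn haT hbT h1 h2
    ext x
    rw [hmemS x, hmemT x, haa', hbb']
  have hupper : 𝒮P.ncard ≤ Fintype.card (Sym2 (Fin n)) := by
    calc 𝒮P.ncard = (Φ '' 𝒮P).ncard := (Set.ncard_image_of_injOn hΦinj).symm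
      _ ≤ (Set.univ : Set (Sym2 (Fin n))).ncard :=
          Set.ncard_le_ncard (Set.subset_univ _) (Set.toFinite _)
      _ = Fintype.card (Sym2 (Fin n)) := by
          rw [Set.ncard_univ, Nat.card_eq_fintype_card]
  have hsym2 : Fintype.card (Sym2 (Fin n)) = Fintype.card (Sym2 V) := by
    rw [Sym2.card, Sym2.card, Fintype.card_fin, hcard]
  calc numSubtrees (SimpleGraph.pathGraph n) = 𝒮P.ncard := rfl
    _ ≤ Fintype.card (Sym2 (Fin n)) := hupper
    _ = (Set.range (psym hG)).ncard := by rw [hsym2, hcardrange]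
    _ < 𝒮G.ncard := hlt
    _ = numSubtrees G := rfl
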